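/- If v and w are functions in \(H^1\) of the unit disk whose boundary values satisfy \(\overline{v(z)} = z^{-N} w(z)\) a.e. on the unit circle for some nonnegative integer N, then v and w are both polynomials of degree at most N. -/

import Mathlib

open MeasureTheory Complex Filter Topology
open scoped Real ComplexConjugate

noncomputable section

instance : Fact (0 < 2 * π) := ⟨by positivity⟩

/-- Normalized arc length (Haar) measure on the circle `ℝ / 2πℤ`. -/
abbrev μT : Measure (AddCircle (2 * π)) := AddCircle.haarAddCircle

/-- The boundary point `e^{iθ}` corresponding to `θ ∈ ℝ / 2πℤ`. -/
def bpt (θ : AddCircle (2 * π)) : ℂ := fourier 1 θ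

/-- The Hardy space `H¹`, viewed as the subset of `L¹` of the circle consisting of
functions whose negative Fourier coefficients vanish. -/
def HardySet : Set (Lp ℂ 1 μT) :=
  {f | ∀ n : ℤ, n < 0 → fourierCoeff (⇑f) n = 0}

/-- A boundary function is inner if it lies in `H¹` (equivalently `H^∞`) and has
unimodular boundary values a.e. -/
def InnerFn (I : AddCircle (2 * π) → ℂ) : Prop :=
  Integrable I μT ∧ (∀ᵐ θ ∂μT, ‖I θ‖ = 1) ∧
    ∀ n : ℤ, n < 0 → fourierCoeff I n = 0

/-- A boundary function is outer if it lies in `H¹`, does not vanish at the origin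
(i.e. has nonzero mean), `log|F|` is integrable, and `log|F(0)| = ∫ log|F|`. -/
def OuterFn (F : AddCircle (2 * π) → ℂ) : Prop :=
  Integrable F μT ∧ (∀ n : ℤ, n < 0 → fourierCoeff F n = 0) ∧
    fourierCoeff F 0 ≠ 0 ∧
    Integrable (fun θ => Real.log ‖F θ‖) μT ∧
    Real.log ‖fourierCoeff F 0‖ = ∫ θ, Real.log ‖F θ‖ ∂μT

/-- The punctured Hardy space `H¹_K`: `H¹` functions whose Fourier coefficients
vanish on the finite set `K`. -/
def HardyKSet (K : Finset ℕ) : Set (Lp ℂ 1 μT) :=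
  {f | (∀ n : ℤ, n < 0 → fourierCoeff (⇑f) n = 0) ∧ ∀ k ∈ K, fourierCoeff (⇑f) (k : ℤ) = 0}

lemma norm_fourier (n : ℤ) (θ : AddCircle (2 * π)) : ‖fourier n θ‖ = 1 := by
  rw [fourier_apply]; simpa using Circle.norm_coe _

lemma contIntegrable (g : C(AddCircle (2 * π), ℂ)) : Integrable g μT :=
  g.continuous.integrable_of_hasCompactSupport ((isClosed_tsupport _).isCompact)

lemma integrable_fourier_mul {f : AddCircle (2 * π) → ℂ} (hf : Integrable f μT) (n : ℤ) :
    Integrable (fun θ => fourier n θ * f θ) μT :=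
  hf.bdd_mul (map_continuous (fourier n)).aestronglyMeasurable (Filter.Eventually.of_forall fun x => (norm_fourier n x).le)

lemma integral_fourier (m : ℤ) : ∫ θ, fourier m θ ∂μT = if m = 0 then 1 else 0 := by
  split_ifs with h
  · subst h
    have : ⇑(fourier (T := 2*π) 0) = (fun _ => 1 : AddCircle (2*π) → ℂ) := by
      ext1; exact fourier_zero
    rw [this, integral_const, probReal_univ, one_smul]
  · exact integral_eq_zero_of_add_right_eq_neg
      (fourier_add_half_inv_index h (by positivity))

lemma fourierCoeff_eq (f : AddCircle (2 * π) → ℂ) (n : ℤ) :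
    fourierCoeff f n = ∫ θ, fourier (-n) θ * f θ ∂μT := rfl

/-- If an integrable function on the circle pairs to zero against every continuous
function, it vanishes a.e. -/
lemma ae_zero_of_forall_cont {f : AddCircle (2 * π) → ℂ} (hf : Integrable f μT)
    (h : ∀ g : C(AddCircle (2 * π), ℂ), ∫ θ, g θ * f θ ∂μT = 0) : f =ᵐ[μT] 0 := by
  apply ae_eq_zero_of_forall_setIntegral_isClosed_eq_zero hf
  intro s hs
  have key : ∀ ε : ℝ, 0 < ε → ‖∫ θ in s, f θ ∂μT‖ ≤ ε := by
    intro ε εpos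
    obtain ⟨δ, δpos, hδ⟩ := exists_pos_setLIntegral_lt_of_measure_lt
      (f := fun θ => (‖f θ‖₊ : ENNReal)) hf.2.ne (ε := ENNReal.ofReal ε)
      ((ENNReal.ofReal_pos.2 εpos).ne')
    obtain ⟨U, hsU, hUopen, hUfin, hUs⟩ := hs.measurableSet.exists_isOpen_diff_lt
      (measure_ne_top μT s) δpos.ne'
    obtain ⟨g, hg0, hg1, hg01⟩ := exists_continuous_zero_one_of_isClosed
      hUopen.isClosed_compl hs
      (disjoint_compl_left_iff.2 hsU)
    set G : C(AddCircle (2 * π), ℂ) :=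
      ⟨fun θ => (g θ : ℂ), Complex.continuous_ofReal.comp g.continuous⟩ with hG
    have hGnorm : ∀ θ, ‖G θ‖ ≤ 1 := by
      intro θ
      simp only [hG, ContinuousMap.coe_mk, Complex.norm_real]
      rw [Real.norm_eq_abs, abs_le]
      exact ⟨by linarith [(hg01 θ).1], (hg01 θ).2⟩
    have hGint : Integrable (fun θ => G θ * f θ) μT :=
      hf.bdd_mul G.continuous.aestronglyMeasurable (Filter.Eventually.of_forall hGnorm)
    have h1 : ∫ θ in s, f θ ∂μT = ∫ θ, (s.indicator f θ - G θ * f θ) ∂μT := by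
      rw [integral_sub (hf.indicator hs.measurableSet) hGint, h G, sub_zero,
        integral_indicator hs.measurableSet]
    rw [h1]
    calc ‖∫ θ, (s.indicator f θ - G θ * f θ) ∂μT‖
        ≤ ∫ θ, ‖s.indicator f θ - G θ * f θ‖ ∂μT := norm_integral_le_integral_norm _
      _ ≤ ∫ θ, (U \ s).indicator (fun θ => ‖f θ‖) θ ∂μT := by
          apply integral_mono ((hf.indicator hs.measurableSet).sub hGint).norm
            (hf.norm.indicator (hUopen.measurableSet.diff hs.measurableSet))
          intro θ
          by_cases hθs : θ ∈ s
          · have hG1 : G θ = 1 := by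
              simp only [hG, ContinuousMap.coe_mk, hg1 hθs]; norm_num
            simp only [Pi.sub_apply]
            rw [Set.indicator_of_mem hθs, hG1, one_mul, sub_self, norm_zero]
            exact Set.indicator_nonneg (fun x _ => norm_nonneg _) _
          · by_cases hθU : θ ∈ U
            · simp only [Pi.sub_apply]
              rw [Set.indicator_of_notMem hθs, Set.indicator_of_mem (show θ ∈ U \ s from ⟨hθU, hθs⟩),
                zero_sub, norm_neg]
              exact (norm_mul_le _ _).trans
                (mul_le_of_le_one_left (norm_nonneg _) (hGnorm θ))
            · have hG0 : G θ = 0 := by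
                simp only [hG, ContinuousMap.coe_mk, hg0 hθU]; norm_num
              simp only [Pi.sub_apply]
              rw [Set.indicator_of_notMem hθs, hG0, zero_mul, sub_zero, norm_zero]
              exact Set.indicator_nonneg (fun x _ => norm_nonneg _) _
      _ = (∫⁻ θ in U \ s, (‖f θ‖₊ : ENNReal) ∂μT).toReal := by
          rw [integral_indicator (hUopen.measurableSet.diff hs.measurableSet)]
          exact integral_norm_eq_lintegral_enorm
            (hf.aestronglyMeasurable.restrict)
      _ ≤ ε := by
          apply ENNReal.toReal_le_of_le_ofReal εpos.le
          exact (hδ _ hUs).le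
  have : ‖∫ θ in s, f θ ∂μT‖ ≤ 0 := le_of_forall_pos_le_add (by simpa using key) |>.trans le_rfl
  simpa using norm_le_zero_iff.1 this

lemma integrable_contMul {f : AddCircle (2 * π) → ℂ} (hf : Integrable f μT)
    (g : C(AddCircle (2 * π), ℂ)) : Integrable (fun θ => g θ * f θ) μT :=
  hf.bdd_mul g.continuous.aestronglyMeasurable (Filter.Eventually.of_forall fun x => g.norm_coe_le_norm x)

/-- Uniqueness: an integrable function with vanishing Fourier coefficients is zero a.e. -/
lemma ae_zero_of_fourierCoeff_zero {f : AddCircle (2 * π) → ℂ} (hf : Integrable f μT)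
    (h : ∀ n : ℤ, fourierCoeff f n = 0) : f =ᵐ[μT] 0 := by
  apply ae_zero_of_forall_cont hf
  set L : C(AddCircle (2 * π), ℂ) →ₗ[ℂ] ℂ :=
    { toFun := fun g => ∫ θ, g θ * f θ ∂μT
      map_add' := fun g₁ g₂ => by
        simp only [ContinuousMap.add_apply, add_mul]
        exact integral_add (integrable_contMul hf g₁) (integrable_contMul hf g₂)
      map_smul' := fun c g => by
        simp only [ContinuousMap.smul_apply, smul_eq_mul, mul_assoc, RingHom.id_apply]
        exact integral_const_mul c _ } with hL
  have hbound : ∀ g : C(AddCircle (2 * π), ℂ), ‖L g‖ ≤ (∫ θ, ‖f θ‖ ∂μT) * ‖g‖ := by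
    intro g
    calc ‖∫ θ, g θ * f θ ∂μT‖ ≤ ∫ θ, ‖g θ * f θ‖ ∂μT := norm_integral_le_integral_norm _
      _ ≤ ∫ θ, ‖g‖ * ‖f θ‖ ∂μT := by
          apply integral_mono (integrable_contMul hf g).norm (hf.norm.const_mul _)
          intro θ
          simp only []
          rw [norm_mul]
          exact mul_le_mul_of_nonneg_right (g.norm_coe_le_norm θ) (norm_nonneg _)
      _ = (∫ θ, ‖f θ‖ ∂μT) * ‖g‖ := by rw [integral_const_mul]; ring
  set Lc : C(AddCircle (2 * π), ℂ) →L[ℂ] ℂ := L.mkContinuous _ hbound with hLc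
  have hsub : Submodule.span ℂ (Set.range (fourier (T := 2 * π))) ≤ LinearMap.ker (Lc : C(AddCircle (2 * π), ℂ) →ₗ[ℂ] ℂ) := by
    rw [Submodule.span_le]
    rintro - ⟨n, rfl⟩
    rw [SetLike.mem_coe, LinearMap.mem_ker]
    show ∫ θ, fourier n θ * f θ ∂μT = 0
    have := h (-n)
    rwa [fourierCoeff_eq, neg_neg] at this
  have hclosed : (Submodule.span ℂ (Set.range (fourier (T := 2 * π)))).topologicalClosure
      ≤ LinearMap.ker (Lc : C(AddCircle (2 * π), ℂ) →ₗ[ℂ] ℂ) :=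
    Submodule.topologicalClosure_minimal _ hsub (ContinuousLinearMap.isClosed_ker Lc)
  rw [span_fourier_closure_eq_top] at hclosed
  intro g
  exact LinearMap.mem_ker.1 (hclosed Submodule.mem_top)

lemma fourierCoeff_fun_sub {f g : AddCircle (2 * π) → ℂ} (hf : Integrable f μT)
    (hg : Integrable g μT) (n : ℤ) :
    fourierCoeff (fun θ => f θ - g θ) n = fourierCoeff f n - fourierCoeff g n := by
  rw [fourierCoeff_eq, fourierCoeff_eq, fourierCoeff_eq,
    ← integral_sub (integrable_fourier_mul hf _) (integrable_fourier_mul hg _)]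
  congr 1
  funext θ
  ring

lemma fourierCoeff_trig (c : ℕ → ℂ) (M : ℕ) (n : ℤ) :
    fourierCoeff (fun θ : AddCircle (2 * π) => ∑ k ∈ Finset.range M, c k * fourier (k : ℤ) θ) n
      = ∑ k ∈ Finset.range M, if n = (k : ℤ) then c k else 0 := by
  rw [fourierCoeff_eq]
  have hrw : ∀ θ : AddCircle (2 * π),
      fourier (-n) θ * ∑ k ∈ Finset.range M, c k * fourier (k : ℤ) θ
        = ∑ k ∈ Finset.range M, c k * fourier ((k : ℤ) - n) θ := by
    intro θ
    rw [Finset.mul_sum]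
    refine Finset.sum_congr rfl fun k _ => ?_
    rw [sub_eq_add_neg, fourier_add]
    ring
  simp_rw [hrw]
  rw [integral_finset_sum _ fun k _ => (contIntegrable (fourier _)).const_mul (c k)]
  refine Finset.sum_congr rfl fun k _ => ?_
  rw [integral_const_mul, integral_fourier]
  by_cases h : n = (k : ℤ)
  · rw [if_pos (by omega : (k : ℤ) - n = 0), if_pos h, mul_one]
  · rw [if_neg (by omega : ¬ (k : ℤ) - n = 0), if_neg h, mul_zero]

lemma bpt_pow (k : ℕ) (θ : AddCircle (2 * π)) : bpt θ ^ k = fourier (k : ℤ) θ := by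
  induction k with
  | zero => simp [fourier_zero]
  | succ k ih =>
    have : ((k + 1 : ℕ) : ℤ) = (k : ℤ) + 1 := by push_cast; ring
    rw [pow_succ, ih, this, fourier_add, bpt]

lemma bpt_zpow_neg (N : ℕ) (θ : AddCircle (2 * π)) :
    bpt θ ^ (-(N : ℤ)) = fourier (-(N : ℤ)) θ := by
  rw [zpow_neg, zpow_natCast, bpt_pow, fourier_neg]
  exact Complex.inv_eq_conj (norm_fourier _ _)

set_option maxHeartbeats 1000000 in
lemma exists_poly_of_band {u : AddCircle (2 * π) → ℂ} (hu : Integrable u μT) (N : ℕ)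
    (h0 : ∀ n : ℤ, n < 0 → fourierCoeff u n = 0)
    (hN : ∀ n : ℤ, (N : ℤ) < n → fourierCoeff u n = 0) :
    ∃ p : Polynomial ℂ, p.natDegree ≤ N ∧ u =ᵐ[μT] fun θ => p.eval (bpt θ) := by
  set c : ℕ → ℂ := fun k => fourierCoeff u (k : ℤ) with hc
  set p : Polynomial ℂ := ∑ k ∈ Finset.range (N + 1), Polynomial.C (c k) * Polynomial.X ^ k
    with hp
  have hdeg : p.natDegree ≤ N := by
    refine Polynomial.natDegree_sum_le_of_forall_le _ _ fun k hk => ?_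
    exact (Polynomial.natDegree_C_mul_X_pow_le _ _).trans
      (Nat.lt_succ_iff.1 (Finset.mem_range.1 hk))
  have heval : ∀ θ, p.eval (bpt θ) = ∑ k ∈ Finset.range (N + 1), c k * fourier (k : ℤ) θ := by
    intro θ
    rw [hp, Polynomial.eval_finset_sum]
    refine Finset.sum_congr rfl fun k _ => ?_
    rw [Polynomial.eval_mul, Polynomial.eval_C, Polynomial.eval_pow, Polynomial.eval_X, bpt_pow]
  set P : AddCircle (2 * π) → ℂ := fun θ => ∑ k ∈ Finset.range (N + 1), c k * fourier (k : ℤ) θ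
    with hPdef
  have hPint : Integrable P μT :=
    integrable_finset_sum _ fun k _ => ((contIntegrable (fourier _)).const_mul (c k))
  have hPcoeff : ∀ n : ℤ, fourierCoeff P n = fourierCoeff u n := by
    intro n
    rw [hPdef, fourierCoeff_trig]
    by_cases hn : n < 0
    · rw [h0 n hn]
      exact Finset.sum_eq_zero fun k _ => if_neg (by omega)
    by_cases hn' : (N : ℤ) < n
    · rw [hN n hn']
      refine Finset.sum_eq_zero fun k hk => if_neg ?_
      have := Finset.mem_range.1 hk
      omega
    have hmem : n.toNat ∈ Finset.range (N + 1) := Finset.mem_range.2 (by omega)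
    have hnn : ((n.toNat : ℕ) : ℤ) = n := by omega
    rw [Finset.sum_eq_single n.toNat (fun k _ hk => if_neg (by omega)) (fun h => (h hmem).elim),
      if_pos hnn.symm, hc]
    simp only []
    rw [hnn]
  have hzero : (fun θ => u θ - P θ) =ᵐ[μT] 0 := by
    apply ae_zero_of_fourierCoeff_zero (hu.sub hPint)
    intro n
    show fourierCoeff (fun θ => u θ - P θ) n = 0
    rw [fourierCoeff_fun_sub hu hPint, hPcoeff, sub_self]
  refine ⟨p, hdeg, ?_⟩
  filter_upwards [hzero] with θ hθ
  have : u θ - P θ = 0 := hθ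
  rw [heval]
  linear_combination this

/-- If `v, w ∈ H¹` have boundary values satisfying `conj v = z^{-N} w` a.e. on the
circle, then `v` and `w` are both polynomials of degree at most `N`. -/
theorem conj_eq_zpow_mul_implies_poly (N : ℕ) (v w : AddCircle (2 * π) → ℂ)
    (hv : Integrable v μT) (hw : Integrable w μT)
    (hvH : ∀ n : ℤ, n < 0 → fourierCoeff v n = 0)
    (hwH : ∀ n : ℤ, n < 0 → fourierCoeff w n = 0)
    (hbd : ∀ᵐ θ ∂μT, conj (v θ) = bpt θ ^ (-(N : ℤ)) * w θ) :
    ∃ p q : Polynomial ℂ, p.natDegree ≤ N ∧ q.natDegree ≤ N ∧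
      v =ᵐ[μT] (fun θ => p.eval (bpt θ)) ∧ w =ᵐ[μT] (fun θ => q.eval (bpt θ)) := by
  have key : ∀ n : ℤ, conj (fourierCoeff v (-n)) = fourierCoeff w (n + (N : ℤ)) := by
    intro n
    have h1 : conj (fourierCoeff v (-n)) = ∫ θ, fourier (-n) θ * conj (v θ) ∂μT := by
      rw [fourierCoeff_eq, neg_neg, ← integral_conj]
      congr 1
      funext θ
      rw [map_mul, ← fourier_neg]
    rw [h1]
    have h2 : ∀ᵐ θ ∂μT, fourier (-n) θ * conj (v θ)
        = fourier (-(n + (N : ℤ))) θ * w θ := by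
      filter_upwards [hbd] with θ hθ
      rw [hθ, bpt_zpow_neg, neg_add, fourier_add]
      ring
    rw [integral_congr_ae h2, fourierCoeff_eq]
  have hv_high : ∀ m : ℤ, (N : ℤ) < m → fourierCoeff v m = 0 := by
    intro m hm
    have h := key (-m)
    rw [neg_neg, hwH _ (by omega)] at h
    have := congrArg conj h
    simpa using this
  have hw_high : ∀ m : ℤ, (N : ℤ) < m → fourierCoeff w m = 0 := by
    intro m hm
    have h := key (m - N)
    rw [show m - (N : ℤ) + N = m by ring, hvH _ (by omega), map_zero] at h
    exact h.symm
  obtain ⟨p, hp1, hp2⟩ := exists_poly_of_band hv N hvH hv_high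
  obtain ⟨q, hq1, hq2⟩ := exists_poly_of_band hw N hwH hw_high
  exact ⟨p, q, hp1, hq1, hp2, hq2⟩
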